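/- arXiv:1912.09687 — 4 statements merged into one kernel-verified Lean document; each statement's English description precedes it below -/
import Mathlib

section
/- For every integer g ≥ 1, the quotient of Ř_g by the ideal generated by the image of u_g is isomorphic, as a graded ℚ-algebra, to Ř_{g−1}, via the map sending the class of u_i to the class of u_i for 1 ≤ i ≤ g−1. -/
set_option synthInstance.maxHeartbeats 1000000
set_option maxHeartbeats 1000000

/-!
STATEMENT 1: For every integer `g ≥ 1`, the quotient of `Ř_g` by the ideal generated by the
image of `u_g` is isomorphic, as a graded ℚ-algebra, to `Ř_{g-1}`, via the map sending the
class of `u_i` to the class of `u_i` for `1 ≤ i ≤ g - 1`.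

(The isomorphism is pinned down on the algebra generators `u_i`, which it maps
degree-preservingly; hence it is automatically graded.)
-/

open MvPolynomial

/-- The polynomial `P_g = (1 + u_1 + ⋯ + u_g)(1 - u_1 + u_2 - ⋯ + (-1)^g u_g) - 1`,
where `u_{i+1}` is the variable `X i` for `i : Fin g`. -/
noncomputable def Pg (g : ℕ) : MvPolynomial (Fin g) ℚ :=
  (1 + ∑ i : Fin g, X i) *
    (1 + ∑ i : Fin g, (-1 : MvPolynomial (Fin g) ℚ) ^ ((i : ℕ) + 1) * X i) - 1

/-- The ideal `I_g` generated by the homogeneous components of `P_g` with respect to the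
grading in which `u_i = X (i-1)` has degree `i`. -/
noncomputable def tautIdeal (g : ℕ) : Ideal (MvPolynomial (Fin g) ℚ) :=
  Ideal.span (Set.range fun n : ℕ =>
    weightedHomogeneousComponent (fun i : Fin g => (i : ℕ) + 1) n (Pg g))

/-- The ring `Ř_g = S_g / I_g`. -/
noncomputable abbrev tautRing (g : ℕ) : Type :=
  MvPolynomial (Fin g) ℚ ⧸ tautIdeal g

/-- The class of `u_{i+1}` in `Ř_g`, for `i : Fin g`. -/
noncomputable def uCls (g : ℕ) (i : Fin g) : tautRing g :=
  Ideal.Quotient.mk (tautIdeal g) (X i)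

/-! ### Auxiliary lemmas -/

lemma whc_monomial {σ : Type*} (w : σ → ℕ) (n : ℕ) (d : σ →₀ ℕ) (c : ℚ) :
    weightedHomogeneousComponent w n (monomial d c)
      = if Finsupp.weight w d = n then monomial d c else 0 := by
  split_ifs with h
  · exact (isWeightedHomogeneous_monomial w d c h).weightedHomogeneousComponent_same
  · exact (isWeightedHomogeneous_monomial w d c rfl).weightedHomogeneousComponent_ne n
      (fun hn => h (hn ▸ rfl))

lemma rename_whc {σ τ : Type*} (f : σ → τ) (w : σ → ℕ) (w' : τ → ℕ)
    (hw : ∀ i, w' (f i) = w i) (n : ℕ) (p : MvPolynomial σ ℚ) :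
    rename f (weightedHomogeneousComponent w n p)
      = weightedHomogeneousComponent w' n (rename f p) := by
  induction p using MvPolynomial.induction_on' with
  | monomial d c =>
      have hwt : Finsupp.weight w' (Finsupp.mapDomain f d) = Finsupp.weight w d := by
        rw [Finsupp.weight_apply, Finsupp.weight_apply,
          Finsupp.sum_mapDomain_index (h := fun i c => c • w' i)
            (fun a => zero_smul _ _) (fun a b₁ b₂ => add_smul b₁ b₂ (w' a))]
        exact Finsupp.sum_congr fun i _ => by rw [hw]
      rw [whc_monomial, rename_monomial, whc_monomial, hwt]
      split_ifs
      · rw [rename_monomial]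
      · simp
  | add p q hp hq => simp [map_add, hp, hq]

lemma X_dvd_whc {σ : Type*} (w : σ → ℕ) (n : ℕ) (j : σ) (q : MvPolynomial σ ℚ) :
    X j ∣ weightedHomogeneousComponent w n (X j * q) := by
  induction q using MvPolynomial.induction_on' with
  | monomial d c =>
      rw [show (X j : MvPolynomial σ ℚ) * monomial d c
            = monomial (Finsupp.single j 1 + d) c from by rw [monomial_single_add, pow_one],
        whc_monomial]
      split_ifs
      · rw [monomial_single_add, pow_one]; exact dvd_mul_right _ _
      · exact dvd_zero _
  | add p q hp hq => rw [mul_add, map_add]; exact dvd_add hp hq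

/-- The difference between `P_{m+1}` and the image of `P_m`. -/
noncomputable def DD (m : ℕ) : MvPolynomial (Fin (m + 1)) ℚ :=
  Pg (m + 1) - rename Fin.castSucc (Pg m)

lemma X_dvd_DD (m : ℕ) : X (Fin.last m) ∣ DD m := by
  have h1 : (∑ i : Fin (m + 1), (X i : MvPolynomial (Fin (m + 1)) ℚ))
      = (∑ i : Fin m, X (Fin.castSucc i)) + X (Fin.last m) := Fin.sum_univ_castSucc _
  have h2 : (∑ i : Fin (m + 1), ((-1 : MvPolynomial (Fin (m + 1)) ℚ) ^ ((i : ℕ) + 1) * X i))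
      = (∑ i : Fin m, (-1 : MvPolynomial (Fin (m + 1)) ℚ) ^ ((i : ℕ) + 1) * X (Fin.castSucc i))
        + (-1) ^ (m + 1) * X (Fin.last m) := by
    rw [Fin.sum_univ_castSucc]
    norm_num
  have h3 : rename (Fin.castSucc (n := m)) (Pg m)
      = (1 + ∑ i : Fin m, (X (Fin.castSucc i) : MvPolynomial (Fin (m + 1)) ℚ)) *
          (1 + ∑ i : Fin m,
            (-1 : MvPolynomial (Fin (m + 1)) ℚ) ^ ((i : ℕ) + 1) * X (Fin.castSucc i)) - 1 := by
    simp [Pg, map_sub, map_mul, map_add, map_one, map_sum, map_pow, map_neg, rename_X]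
  refine ⟨(1 + ∑ i : Fin m, (X (Fin.castSucc i) : MvPolynomial (Fin (m + 1)) ℚ)) * (-1) ^ (m + 1)
      + (1 + ∑ i : Fin m,
          (-1 : MvPolynomial (Fin (m + 1)) ℚ) ^ ((i : ℕ) + 1) * X (Fin.castSucc i))
      + (-1) ^ (m + 1) * X (Fin.last m), ?_⟩
  rw [DD, Pg, h1, h2, h3]
  ring

lemma gen_eq (m n : ℕ) :
    weightedHomogeneousComponent (fun i : Fin (m + 1) => (i : ℕ) + 1) n (Pg (m + 1))
      = rename Fin.castSucc
          (weightedHomogeneousComponent (fun i : Fin m => (i : ℕ) + 1) n (Pg m))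
        + weightedHomogeneousComponent (fun i : Fin (m + 1) => (i : ℕ) + 1) n (DD m) := by
  have h : Pg (m + 1) = rename Fin.castSucc (Pg m) + DD m := by rw [DD]; ring
  rw [h, map_add, ← rename_whc Fin.castSucc (fun i : Fin m => (i : ℕ) + 1)
    (fun i : Fin (m + 1) => (i : ℕ) + 1) (fun i => rfl) n (Pg m)]

lemma main_aux (m : ℕ) :
    ∃ e : (tautRing (m + 1) ⧸ Ideal.span {uCls (m + 1) (Fin.last m)}) ≃ₐ[ℚ] tautRing m,
      ∀ i : Fin m,
        e (Ideal.Quotient.mk (Ideal.span {uCls (m + 1) (Fin.last m)})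
            (uCls (m + 1) (Fin.castSucc i))) = uCls m i := by
  classical
  set J : Ideal (tautRing (m + 1)) := Ideal.span {uCls (m + 1) (Fin.last m)} with hJ
  -- the substitution map killing the last variable
  let r : MvPolynomial (Fin (m + 1)) ℚ →ₐ[ℚ] MvPolynomial (Fin m) ℚ :=
    aeval (fun i => Fin.lastCases 0 X i)
  have hrc : ∀ j : Fin m, r (X (Fin.castSucc j)) = X j := fun j => by
    simp only [r, aeval_X]
    exact Fin.lastCases_castSucc ..
  have hrl : r (X (Fin.last m)) = 0 := by
    simp only [r, aeval_X]
    exact Fin.lastCases_last ..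
  have hrk : ∀ p : MvPolynomial (Fin m) ℚ, r (rename Fin.castSucc p) = p := by
    intro p
    induction p using MvPolynomial.induction_on with
    | C a => simp
    | add p q hp hq => simp [map_add, hp, hq]
    | mul_X p i hp => rw [map_mul, rename_X, map_mul, hp, hrc]
  -- the downward algebra map
  let φ₀ : MvPolynomial (Fin (m + 1)) ℚ →ₐ[ℚ] tautRing m :=
    (Ideal.Quotient.mkₐ ℚ (tautIdeal m)).comp r
  have hφ₀X : ∀ j : Fin m, φ₀ (X (Fin.castSucc j)) = uCls m j := fun j => by
    simp only [φ₀, AlgHom.comp_apply, hrc, Ideal.Quotient.mkₐ_eq_mk, uCls]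
  have hφ₀last : φ₀ (X (Fin.last m)) = 0 := by
    simp only [φ₀, AlgHom.comp_apply, hrl, Ideal.Quotient.mkₐ_eq_mk, map_zero]
  have hφ₀ : ∀ a ∈ tautIdeal (m + 1), φ₀ a = 0 := by
    have hle : tautIdeal (m + 1) ≤ RingHom.ker φ₀ := by
      rw [tautIdeal, Ideal.span_le]
      rintro _ ⟨n, rfl⟩
      rw [SetLike.mem_coe, RingHom.mem_ker]
      show φ₀ (weightedHomogeneousComponent (fun i : Fin (m + 1) => (i : ℕ) + 1) n
        (Pg (m + 1))) = 0
      rw [gen_eq m n, map_add]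
      have h1 : φ₀ (rename Fin.castSucc
          (weightedHomogeneousComponent (fun i : Fin m => (i : ℕ) + 1) n (Pg m))) = 0 := by
        simp only [φ₀, AlgHom.comp_apply, hrk, Ideal.Quotient.mkₐ_eq_mk]
        rw [Ideal.Quotient.eq_zero_iff_mem]
        exact Ideal.subset_span ⟨n, rfl⟩
      have h2 : φ₀ (weightedHomogeneousComponent
          (fun i : Fin (m + 1) => (i : ℕ) + 1) n (DD m)) = 0 := by
        obtain ⟨q0, hq0⟩ := X_dvd_DD m
        obtain ⟨q, hq⟩ := X_dvd_whc (fun i : Fin (m + 1) => (i : ℕ) + 1) n (Fin.last m) q0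
        rw [← hq0] at hq
        rw [hq, map_mul, hφ₀last, zero_mul]
      rw [h1, h2, add_zero]
    exact fun a ha => hle ha
  let φ₁ : tautRing (m + 1) →ₐ[ℚ] tautRing m :=
    Ideal.Quotient.liftₐ (tautIdeal (m + 1)) φ₀ hφ₀
  have hφ₁mk : ∀ p, φ₁ (Ideal.Quotient.mk (tautIdeal (m + 1)) p) = φ₀ p := fun p => by
    simp only [φ₁, Ideal.Quotient.liftₐ_apply, Ideal.Quotient.lift_mk, AlgHom.coe_toRingHom]; rfl
  have hφ₁ : ∀ a ∈ J, φ₁ a = 0 := by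
    intro a ha
    rw [hJ, Ideal.mem_span_singleton] at ha
    obtain ⟨c, rfl⟩ := ha
    rw [map_mul]
    have : φ₁ (uCls (m + 1) (Fin.last m)) = 0 := by
      rw [uCls, hφ₁mk, hφ₀last]
    rw [this, zero_mul]
  let φ₂ : (tautRing (m + 1) ⧸ J) →ₐ[ℚ] tautRing m := Ideal.Quotient.liftₐ J φ₁ hφ₁
  have hφ₂mk : ∀ p, φ₂ (Ideal.Quotient.mk J p) = φ₁ p := fun p => by
    simp only [φ₂, Ideal.Quotient.liftₐ_apply, Ideal.Quotient.lift_mk, AlgHom.coe_toRingHom]; rfl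
  -- the upward algebra map
  let ψ₀ : MvPolynomial (Fin m) ℚ →ₐ[ℚ] (tautRing (m + 1) ⧸ J) :=
    (Ideal.Quotient.mkₐ ℚ J).comp
      ((Ideal.Quotient.mkₐ ℚ (tautIdeal (m + 1))).comp (rename Fin.castSucc))
  have hψ₀ : ∀ a ∈ tautIdeal m, ψ₀ a = 0 := by
    have hle : tautIdeal m ≤ RingHom.ker ψ₀ := by
      rw [tautIdeal, Ideal.span_le]
      rintro _ ⟨n, rfl⟩
      rw [SetLike.mem_coe, RingHom.mem_ker]
      show ψ₀ (weightedHomogeneousComponent (fun i : Fin m => (i : ℕ) + 1) n (Pg m)) = 0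
      have hsplit : rename Fin.castSucc
          (weightedHomogeneousComponent (fun i : Fin m => (i : ℕ) + 1) n (Pg m))
          = weightedHomogeneousComponent (fun i : Fin (m + 1) => (i : ℕ) + 1) n (Pg (m + 1))
            - weightedHomogeneousComponent (fun i : Fin (m + 1) => (i : ℕ) + 1) n (DD m) := by
        rw [gen_eq m n]; ring
      simp only [ψ₀, AlgHom.comp_apply, Ideal.Quotient.mkₐ_eq_mk]
      rw [hsplit, map_sub, map_sub]
      have h1 : Ideal.Quotient.mk (tautIdeal (m + 1))
          (weightedHomogeneousComponent (fun i : Fin (m + 1) => (i : ℕ) + 1) n (Pg (m + 1)))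
          = 0 := by
        rw [Ideal.Quotient.eq_zero_iff_mem]
        exact Ideal.subset_span ⟨n, rfl⟩
      have h2 : Ideal.Quotient.mk J (Ideal.Quotient.mk (tautIdeal (m + 1))
          (weightedHomogeneousComponent (fun i : Fin (m + 1) => (i : ℕ) + 1) n (DD m)))
          = 0 := by
        obtain ⟨q0, hq0⟩ := X_dvd_DD m
        obtain ⟨q, hq⟩ := X_dvd_whc (fun i : Fin (m + 1) => (i : ℕ) + 1) n (Fin.last m) q0
        rw [← hq0] at hq
        rw [hq, map_mul, Ideal.Quotient.eq_zero_iff_mem]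
        exact Ideal.mul_mem_right _ _ (Ideal.subset_span rfl)
      rw [h1, h2, map_zero, zero_sub, neg_zero]
    exact fun a ha => hle ha
  let ψ : tautRing m →ₐ[ℚ] (tautRing (m + 1) ⧸ J) :=
    Ideal.Quotient.liftₐ (tautIdeal m) ψ₀ hψ₀
  have hψmk : ∀ p, ψ (Ideal.Quotient.mk (tautIdeal m) p) = ψ₀ p := fun p => by
    simp only [ψ, Ideal.Quotient.liftₐ_apply, Ideal.Quotient.lift_mk, AlgHom.coe_toRingHom]; rfl
  -- the two composites are the identity
  have h1 : φ₂.comp ψ = AlgHom.id ℚ (tautRing m) := by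
    apply Ideal.Quotient.algHom_ext
    apply MvPolynomial.algHom_ext
    intro i
    simp only [AlgHom.comp_apply, Ideal.Quotient.mkₐ_eq_mk, AlgHom.id_apply]
    rw [hψmk]
    simp only [ψ₀, AlgHom.comp_apply, Ideal.Quotient.mkₐ_eq_mk, rename_X]
    rw [hφ₂mk, hφ₁mk, hφ₀X]
    rfl
  have h2 : ψ.comp φ₂ = AlgHom.id ℚ (tautRing (m + 1) ⧸ J) := by
    apply Ideal.Quotient.algHom_ext
    apply Ideal.Quotient.algHom_ext
    apply MvPolynomial.algHom_ext
    intro i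
    simp only [AlgHom.comp_apply, Ideal.Quotient.mkₐ_eq_mk, AlgHom.id_apply]
    rw [hφ₂mk, hφ₁mk]
    induction i using Fin.lastCases with
    | last =>
        rw [hφ₀last, map_zero]
        symm
        rw [Ideal.Quotient.eq_zero_iff_mem]
        exact Ideal.subset_span rfl
    | cast j =>
        rw [hφ₀X, uCls, hψmk]
        simp only [ψ₀, AlgHom.comp_apply, Ideal.Quotient.mkₐ_eq_mk, rename_X]
  refine ⟨AlgEquiv.ofAlgHom φ₂ ψ h1 h2, fun i => ?_⟩
  show φ₂ (Ideal.Quotient.mk J (uCls (m + 1) (Fin.castSucc i))) = uCls m i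
  rw [hφ₂mk, uCls, hφ₁mk, hφ₀X]

theorem tautRing_quotient_last (g : ℕ) (hg : 1 ≤ g) :
    ∃ e : (tautRing g ⧸ Ideal.span {uCls g ⟨g - 1, by omega⟩}) ≃ₐ[ℚ] tautRing (g - 1),
      ∀ i : Fin (g - 1),
        e (Ideal.Quotient.mk (Ideal.span {uCls g ⟨g - 1, by omega⟩})
            (uCls g (Fin.castLE (by omega) i))) = uCls (g - 1) i := by
  obtain ⟨m, rfl⟩ : ∃ m, g = m + 1 := ⟨g - 1, by omega⟩
  obtain ⟨e, he⟩ := main_aux m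
  exact ⟨e, fun i => he i⟩
end

section
/- Let (H, ω) be a symplectic k-vector space of dimension 2g. Then the diagonal action of Sp(H, ω) on the set of ordered pairs of Lagrangian subspaces of H has exactly g + 1 orbits. -/
/-!
STATEMENT 6: Let `(H, ω)` be a symplectic `k`-vector space of dimension `2g`. Then the
diagonal action of `Sp(H, ω)` on the set of ordered pairs of Lagrangian subspaces of `H`
has exactly `g + 1` orbits.

(We express "exactly `g + 1` orbits" by the existence of a surjection onto `Fin (g + 1)`
whose fibers are exactly the orbits.)
-/

/-- The orthogonal complement `F^⊥ = {x ∈ H : ω x y = 0 for all y ∈ F}`. -/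
def perp {k H : Type*} [Field k] [AddCommGroup H] [Module k H]
    (ω : H →ₗ[k] H →ₗ[k] k) (F : Submodule k H) : Submodule k H where
  carrier := {x | ∀ y ∈ F, ω x y = 0}
  add_mem' := by
    intro a b ha hb y hy
    simp only [map_add, LinearMap.add_apply, ha y hy, hb y hy, add_zero]
  zero_mem' := by
    intro y hy
    simp
  smul_mem' := by
    intro c x hx y hy
    simp only [map_smul, LinearMap.smul_apply, hx y hy, smul_zero]

/-- A subspace is Lagrangian if it equals its own orthogonal complement. -/
def IsLagrangian {k H : Type*} [Field k] [AddCommGroup H] [Module k H]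
    (ω : H →ₗ[k] H →ₗ[k] k) (F : Submodule k H) : Prop :=
  perp ω F = F


section Part1
variable {k H : Type*} [Field k] [AddCommGroup H] [Module k H]
  (ω : H →ₗ[k] H →ₗ[k] k)

lemma mem_perp {F : Submodule k H} {x : H} : x ∈ perp ω F ↔ ∀ y ∈ F, ω x y = 0 :=
  Iff.rfl

lemma skew (halt : ∀ x, ω x x = 0) (x y : H) : ω x y = -ω y x := by
  have h := halt (x + y)
  simp only [map_add, LinearMap.add_apply, halt x, halt y] at h
  linear_combination h

/-- The map `H →ₗ Dual F` induced by `ω`. -/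
noncomputable def omDual (F : Submodule k H) : H →ₗ[k] Module.Dual k F :=
  { toFun := fun x => (ω x).comp F.subtype
    map_add' := by intro a b; ext y; simp
    map_smul' := by intro c a; ext y; simp }

lemma ker_omDual (F : Submodule k H) : LinearMap.ker (omDual ω F) = perp ω F := by
  ext x
  simp only [LinearMap.mem_ker, omDual, LinearMap.coe_mk, AddHom.coe_mk, mem_perp]
  constructor
  · intro h y hy
    have := LinearMap.congr_fun h ⟨y, hy⟩
    simpa using this
  · intro h
    ext ⟨y, hy⟩
    simpa using h y hy

set_option linter.unusedSectionVars false
variable [FiniteDimensional k H]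

lemma surj_omDual (hnd : ∀ x, (∀ y, ω x y = 0) → x = 0) (F : Submodule k H) :
    Function.Surjective (omDual ω F) := by
  -- ω : H →ₗ Dual H is injective hence surjective; compose with dualRestrict
  have hinj : Function.Injective ω := by
    intro x y hxy
    have : ∀ z, ω (x - y) z = 0 := by
      intro z; simp [map_sub, hxy]
    have := hnd _ this
    exact sub_eq_zero.mp this
  have hrange : LinearMap.range ω = ⊤ := by
    apply Submodule.eq_top_of_finrank_eq
    rw [LinearMap.finrank_range_of_inj hinj, Subspace.dual_finrank_eq]
  intro φ
  obtain ⟨ψ, hψ⟩ := Subspace.dualRestrict_surjective (W := F) φ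
  have : ψ ∈ LinearMap.range ω := hrange ▸ Submodule.mem_top
  obtain ⟨x, hx⟩ := this
  refine ⟨x, ?_⟩
  ext y
  have := LinearMap.congr_fun hψ y
  simp only [omDual, LinearMap.coe_mk, AddHom.coe_mk, LinearMap.comp_apply,
    Submodule.coe_subtype, hx]
  simpa [Submodule.dualRestrict_apply] using this

lemma finrank_perp (hnd : ∀ x, (∀ y, ω x y = 0) → x = 0) (F : Submodule k H) :
    Module.finrank k (perp ω F) + Module.finrank k F = Module.finrank k H := by
  have h := LinearMap.finrank_range_add_finrank_ker (omDual ω F)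
  rw [ker_omDual] at h
  have hr : LinearMap.range (omDual ω F) = ⊤ :=
    LinearMap.range_eq_top.mpr (surj_omDual ω hnd F)
  rw [hr, finrank_top] at h
  have : Module.finrank k (Module.Dual k F) = Module.finrank k F :=
    Subspace.dual_finrank_eq
  omega

lemma lagrangian_finrank (hnd : ∀ x, (∀ y, ω x y = 0) → x = 0) {g : ℕ}
    (hdim : Module.finrank k H = 2 * g) {F : Submodule k H} (hF : IsLagrangian ω F) :
    Module.finrank k F = g := by
  have := finrank_perp ω hnd F
  rw [IsLagrangian] at hF
  rw [hF, hdim] at this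
  omega

lemma lagrangian_isotropic {F : Submodule k H} (hF : IsLagrangian ω F) :
    ∀ x ∈ F, ∀ y ∈ F, ω x y = 0 := by
  intro x hx y hy
  rw [IsLagrangian] at hF
  rw [← hF] at hx
  exact hx y hy

/-- isotropic + half dimension ⇒ Lagrangian -/
lemma lagrangian_of_isotropic (hnd : ∀ x, (∀ y, ω x y = 0) → x = 0) {g : ℕ}
    (hdim : Module.finrank k H = 2 * g) {F : Submodule k H}
    (hiso : ∀ x ∈ F, ∀ y ∈ F, ω x y = 0) (hfr : Module.finrank k F = g) :
    IsLagrangian ω F := by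
  have hle : F ≤ perp ω F := fun x hx y hy => hiso x hx y hy
  have h := finrank_perp ω hnd F
  rw [hfr, hdim] at h
  exact (Submodule.eq_of_le_of_finrank_le hle (by omega)).symm

/-- Existence of a Lagrangian subspace. -/
lemma exists_lagrangian (halt : ∀ x, ω x x = 0) (hnd : ∀ x, (∀ y, ω x y = 0) → x = 0) :
    ∃ F : Submodule k H, IsLagrangian ω F := by
  -- take a maximal isotropic subspace
  set S := {F : Submodule k H | ∀ x ∈ F, ∀ y ∈ F, ω x y = 0} with hS
  have hwf : WellFounded ((· > ·) : Submodule k H → Submodule k H → Prop) := wellFounded_gt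
  obtain ⟨F, hF, hmax⟩ := hwf.has_min S ⟨⊥, by intro x hx; simp at hx; simp [hx]⟩
  refine ⟨F, ?_⟩
  -- F ≤ perp ω F
  have hle : F ≤ perp ω F := fun x hx y hy => hF x hx y hy
  rw [IsLagrangian]
  by_contra hne
  -- get v ∈ perp ω F, v ∉ F
  have hlt : F < perp ω F := lt_of_le_of_ne hle (fun h => hne h.symm)
  obtain ⟨v, hv, hvF⟩ := SetLike.exists_of_lt hlt
  -- F ⊔ span v is isotropic and strictly bigger
  have hiso' : (F ⊔ Submodule.span k {v}) ∈ S := by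
    intro x hx y hy
    rw [Submodule.mem_sup] at hx hy
    obtain ⟨m, hm, z, hz, rfl⟩ := hx
    obtain ⟨m', hm', z', hz', rfl⟩ := hy
    rw [Submodule.mem_span_singleton] at hz hz'
    obtain ⟨c, rfl⟩ := hz
    obtain ⟨c', rfl⟩ := hz'
    have h1 : ω m m' = 0 := hF m hm m' hm'
    have h2 : ω v m' = 0 := hv m' hm'
    have h3 : ω m v = 0 := by
      rw [skew ω halt]; simp [hv m hm]
    have h4 : ω v v = 0 := halt v
    simp only [map_add, map_smul, LinearMap.add_apply, LinearMap.smul_apply,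
      h1, h2, h3, h4, smul_zero, add_zero, zero_add]
  have hstrict : F < F ⊔ Submodule.span k {v} := by
    refine lt_of_le_of_ne le_sup_left (fun h => ?_)
    apply hvF
    rw [h]
    exact Submodule.mem_sup_right (Submodule.mem_span_singleton_self v)
  exact hmax _ hiso' hstrict

end Part1

section Part2
variable {k : Type*} [Field k]

/-- standard symplectic form on `Fin g → k × k` -/
noncomputable def omegaM (k : Type*) [Field k] (g : ℕ) :
    (Fin g → k × k) →ₗ[k] (Fin g → k × k) →ₗ[k] k :=
  LinearMap.mk₂ k (fun f h => ∑ i, ((f i).1 * (h i).2 - (f i).2 * (h i).1))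
    (by intro m₁ m₂ n; rw [← Finset.sum_add_distrib]; apply Finset.sum_congr rfl
        intro i _; simp [Prod.fst_add, Prod.snd_add]; ring)
    (by intro c m n; rw [Finset.smul_sum]; apply Finset.sum_congr rfl
        intro i _; simp [Prod.smul_fst, Prod.smul_snd, smul_eq_mul]; ring)
    (by intro m n₁ n₂; rw [← Finset.sum_add_distrib]; apply Finset.sum_congr rfl
        intro i _; simp [Prod.fst_add, Prod.snd_add]; ring)
    (by intro c m n; rw [Finset.smul_sum]; apply Finset.sum_congr rfl
        intro i _; simp [Prod.smul_fst, Prod.smul_snd, smul_eq_mul]; ring)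

lemma omegaM_apply {g : ℕ} (f h : Fin g → k × k) :
    omegaM k g f h = ∑ i, ((f i).1 * (h i).2 - (f i).2 * (h i).1) := rfl

lemma omegaM_alt (g : ℕ) : ∀ f : Fin g → k × k, omegaM k g f f = 0 := by
  intro f; rw [omegaM_apply]; apply Finset.sum_eq_zero; intro i _; ring

lemma omegaM_nondeg (g : ℕ) : ∀ f : Fin g → k × k, (∀ h, omegaM k g f h = 0) → f = 0 := by
  intro f hf
  funext i
  have h1 := hf (fun j => if j = i then (0, 1) else 0)
  have h2 := hf (fun j => if j = i then (1, 0) else 0)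
  rw [omegaM_apply] at h1 h2
  rw [Finset.sum_eq_single i (fun b _ hb => by simp [hb]) (fun h => absurd (Finset.mem_univ i) h)] at h1
  rw [Finset.sum_eq_single i (fun b _ hb => by simp [hb]) (fun h => absurd (Finset.mem_univ i) h)] at h2
  simp at h1 h2
  ext <;> simp [h1, h2]

/-- the first standard Lagrangian -/
def PM (k : Type*) [Field k] (g : ℕ) : Submodule k (Fin g → k × k) where
  carrier := {f | ∀ i, (f i).2 = 0}
  add_mem' := by intro a b ha hb i; simp [ha i, hb i]
  zero_mem' := by intro i; simp
  smul_mem' := by intro c a ha i; simp [ha i]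

/-- the second standard Lagrangian, sharing `d` dimensions with `PM` -/
def QM (k : Type*) [Field k] (g d : ℕ) : Submodule k (Fin g → k × k) where
  carrier := {f | ∀ i : Fin g, ((i : ℕ) < d → (f i).2 = 0) ∧ (d ≤ (i : ℕ) → (f i).1 = 0)}
  add_mem' := by
    intro a b ha hb i
    exact ⟨fun h => by simp [(ha i).1 h, (hb i).1 h], fun h => by simp [(ha i).2 h, (hb i).2 h]⟩
  zero_mem' := by intro i; simp
  smul_mem' := by
    intro c a ha i
    exact ⟨fun h => by simp [(ha i).1 h], fun h => by simp [(ha i).2 h]⟩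

lemma mem_PM {g : ℕ} {f : Fin g → k × k} : f ∈ PM k g ↔ ∀ i, (f i).2 = 0 := Iff.rfl
lemma mem_QM {g d : ℕ} {f : Fin g → k × k} :
    f ∈ QM k g d ↔ ∀ i : Fin g, ((i : ℕ) < d → (f i).2 = 0) ∧ (d ≤ (i : ℕ) → (f i).1 = 0) :=
  Iff.rfl

lemma PM_isotropic {g : ℕ} : ∀ f ∈ PM k g, ∀ h ∈ PM k g, omegaM k g f h = 0 := by
  intro f hf h hh
  rw [omegaM_apply]
  apply Finset.sum_eq_zero
  intro i _
  rw [hf i, hh i]; ring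

lemma QM_isotropic {g d : ℕ} : ∀ f ∈ QM k g d, ∀ h ∈ QM k g d, omegaM k g f h = 0 := by
  intro f hf h hh
  rw [omegaM_apply]
  apply Finset.sum_eq_zero
  intro i _
  rcases lt_or_ge (i : ℕ) d with hi | hi
  · rw [(hf i).1 hi, (hh i).1 hi]; ring
  · rw [(hf i).2 hi, (hh i).2 hi]; ring

lemma finrank_PM (g : ℕ) : Module.finrank k (PM k g) = g := by
  let l : (Fin g → k) →ₗ[k] (Fin g → k × k) :=
    { toFun := fun a i => (a i, 0)
      map_add' := by intro a b; funext i; simp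
      map_smul' := by intro c a; funext i; simp }
  have hinj : Function.Injective l := by
    intro a b hab
    funext i
    have := congrFun hab i
    simpa [l] using congrArg Prod.fst this
  have hrange : LinearMap.range l = PM k g := by
    ext f
    constructor
    · rintro ⟨a, rfl⟩ i; rfl
    · intro hf
      exact ⟨fun i => (f i).1, by funext i; ext <;> simp [l, (hf i)]⟩
  rw [← hrange, LinearMap.finrank_range_of_inj hinj, Module.finrank_fin_fun]

lemma finrank_QM (g d : ℕ) : Module.finrank k (QM k g d) = g := by
  let l : (Fin g → k) →ₗ[k] (Fin g → k × k) :=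
    { toFun := fun a i => if (i : ℕ) < d then (a i, 0) else (0, a i)
      map_add' := by intro a b; funext i; by_cases h : (i : ℕ) < d <;> simp [h]
      map_smul' := by intro c a; funext i; by_cases h : (i : ℕ) < d <;> simp [h] }
  have hinj : Function.Injective l := by
    intro a b hab
    funext i
    have := congrFun hab i
    by_cases h : (i : ℕ) < d
    · simpa [l, h] using congrArg Prod.fst this
    · simpa [l, h] using congrArg Prod.snd this
  have hrange : LinearMap.range l = QM k g d := by
    ext f
    constructor
    · rintro ⟨a, rfl⟩ i
      constructor
      · intro h; simp [l, h]
      · intro h; simp [l, (show ¬ ((i : ℕ) < d) by omega)]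
    · intro hf
      refine ⟨fun i => if (i : ℕ) < d then (f i).1 else (f i).2, ?_⟩
      funext i
      by_cases h : (i : ℕ) < d
      · ext <;> simp [l, h, (hf i).1 h]
      · ext <;> simp [l, h, (hf i).2 (le_of_not_gt h)]
  rw [← hrange, LinearMap.finrank_range_of_inj hinj, Module.finrank_fin_fun]

lemma finrank_PM_inf_QM (g d : ℕ) (hd : d ≤ g) :
    Module.finrank k ((PM k g) ⊓ (QM k g d) : Submodule k (Fin g → k × k)) = d := by
  let l : (Fin d → k) →ₗ[k] (Fin g → k × k) :=
    { toFun := fun a i => if h : (i : ℕ) < d then (a ⟨i, h⟩, 0) else 0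
      map_add' := by intro a b; funext i; by_cases h : (i : ℕ) < d <;> simp [h]
      map_smul' := by intro c a; funext i; by_cases h : (i : ℕ) < d <;> simp [h] }
  have hinj : Function.Injective l := by
    intro a b hab
    funext i
    have := congrFun hab ⟨(i : ℕ), lt_of_lt_of_le i.2 hd⟩
    simpa [l, i.2] using congrArg Prod.fst this
  have hrange : LinearMap.range l = (PM k g) ⊓ (QM k g d) := by
    ext f
    constructor
    · rintro ⟨a, rfl⟩
      refine ⟨fun i => ?_, fun i => ⟨fun h => ?_, fun h => ?_⟩⟩
      · by_cases h : (i : ℕ) < d <;> simp [l, h]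
      · simp [l, h]
      · simp [l, (show ¬ ((i : ℕ) < d) by omega)]
    · rintro ⟨h1, h2⟩
      refine ⟨fun i => (f (⟨i, lt_of_lt_of_le i.2 hd⟩ : Fin g)).1, ?_⟩
      funext i
      by_cases h : (i : ℕ) < d
      · ext
        · simp [l, h]
        · simp [l, h, h1 i]
      · have := (h2 i).2 (le_of_not_gt h)
        ext
        · simp [l, h, this]
        · simp [l, h, h1 i]
  rw [← hrange, LinearMap.finrank_range_of_inj hinj, Module.finrank_fin_fun]

lemma finrank_model (g : ℕ) : Module.finrank k (Fin g → k × k) = 2 * g := by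
  simp [Module.finrank_pi_fintype, Module.finrank_prod]
  ring

end Part2

section Part3
variable {k : Type*} [Field k]

def splitM (k : Type*) [Field k] (g : ℕ) :
    (Fin (g + 1) → k × k) ≃ₗ[k] (k × k) × (Fin g → k × k) where
  toFun f := (f 0, fun i => f i.succ)
  invFun p := Fin.cons p.1 p.2
  map_add' a b := rfl
  map_smul' c a := rfl
  left_inv f := by
    funext i
    exact Fin.cases rfl (fun j => rfl) i
  right_inv p := by
    ext <;> simp

lemma splitM_symm_apply {g : ℕ} (p : (k × k) × (Fin g → k × k)) :
    (splitM k g).symm p = Fin.cons p.1 p.2 := rfl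

noncomputable def omegaM2 (k : Type*) [Field k] : (k × k) →ₗ[k] (k × k) →ₗ[k] k :=
  LinearMap.mk₂ k (fun a b => a.1 * b.2 - a.2 * b.1)
    (by intro m₁ m₂ n; simp; ring) (by intro c m n; simp; ring)
    (by intro m n₁ n₂; simp; ring) (by intro c m n; simp; ring)

lemma omegaM_succ {g : ℕ} (f h : Fin (g + 1) → k × k) :
    omegaM k (g + 1) f h =
      omegaM2 k (f 0) (h 0) + omegaM k g (fun i => f i.succ) (fun i => h i.succ) := by
  rw [omegaM_apply, omegaM_apply, Fin.sum_univ_succ]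
  rfl

lemma mem_span_10 {x : k × k} : x ∈ Submodule.span k {((1 : k), (0 : k))} ↔ x.2 = 0 := by
  rw [Submodule.mem_span_singleton]
  constructor
  · rintro ⟨a, rfl⟩; simp
  · intro h; exact ⟨x.1, by ext <;> simp [h]⟩

lemma mem_span_01 {x : k × k} : x ∈ Submodule.span k {((0 : k), (1 : k))} ↔ x.1 = 0 := by
  rw [Submodule.mem_span_singleton]
  constructor
  · rintro ⟨a, rfl⟩; simp
  · intro h; exact ⟨x.2, by ext <;> simp [h]⟩

lemma map_splitM_PM (g : ℕ) :
    (PM k (g + 1)).map (splitM k g : (Fin (g+1) → k × k) →ₗ[k] _) =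
      (Submodule.span k {((1 : k), (0 : k))}).prod (PM k g) := by
  ext z
  rw [Submodule.mem_map_equiv]
  simp only [Submodule.mem_prod, mem_span_10, mem_PM, splitM_symm_apply]
  constructor
  · intro h
    exact ⟨h 0, fun i => h i.succ⟩
  · rintro ⟨h1, h2⟩ i
    refine Fin.cases ?_ ?_ i
    · simpa using h1
    · intro j; simpa using h2 j

lemma map_splitM_QM_zero (g : ℕ) :
    (QM k (g + 1) 0).map (splitM k g : (Fin (g+1) → k × k) →ₗ[k] _) =
      (Submodule.span k {((0 : k), (1 : k))}).prod (QM k g 0) := by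
  ext z
  rw [Submodule.mem_map_equiv]
  simp only [Submodule.mem_prod, mem_span_01, mem_QM, splitM_symm_apply]
  constructor
  · intro h
    refine ⟨by simpa using (h 0).2 (Nat.zero_le _),
      fun i => ⟨fun hi => absurd hi (Nat.not_lt_zero _), fun _ => ?_⟩⟩
    simpa using (h i.succ).2 (Nat.zero_le _)
  · rintro ⟨h1, h2⟩ i
    refine ⟨fun hi => absurd hi (Nat.not_lt_zero _), fun _ => ?_⟩
    refine Fin.cases ?_ ?_ i
    · simpa using h1
    · intro j; simpa using (h2 j).2 (Nat.zero_le _)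

lemma map_splitM_QM_succ (g d : ℕ) :
    (QM k (g + 1) (d + 1)).map (splitM k g : (Fin (g+1) → k × k) →ₗ[k] _) =
      (Submodule.span k {((1 : k), (0 : k))}).prod (QM k g d) := by
  ext z
  rw [Submodule.mem_map_equiv]
  simp only [Submodule.mem_prod, mem_span_10, mem_QM, splitM_symm_apply]
  constructor
  · intro h
    have h0 : ((0 : Fin (g+1)) : ℕ) < d + 1 := by rw [Fin.val_zero]; omega
    refine ⟨by simpa using (h 0).1 h0, fun i => ⟨fun hi => ?_, fun hi => ?_⟩⟩
    · have hv : ((i.succ : Fin (g+1)) : ℕ) < d + 1 := by rw [Fin.val_succ]; omega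
      simpa using (h i.succ).1 hv
    · have hv : d + 1 ≤ ((i.succ : Fin (g+1)) : ℕ) := by rw [Fin.val_succ]; omega
      simpa using (h i.succ).2 hv
  · rintro ⟨h1, h2⟩ i
    refine Fin.cases ?_ ?_ i
    · refine ⟨fun _ => by simpa using h1, fun hc => ?_⟩
      rw [Fin.val_zero] at hc; omega
    · intro j
      refine ⟨fun hj => ?_, fun hj => ?_⟩
      · rw [Fin.val_succ] at hj
        simpa using (h2 j).1 (by omega)
      · rw [Fin.val_succ] at hj
        simpa using (h2 j).2 (by omega)

end Part3
section Part4
variable {k : Type*} [Field k] {H : Type*} [AddCommGroup H] [Module k H]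

lemma mem_perp_pair (ω : H →ₗ[k] H →ₗ[k] k) (u v : H) {x : H} :
    x ∈ perp ω (Submodule.span k ({u, v} : Set H)) ↔ ω x u = 0 ∧ ω x v = 0 := by
  rw [mem_perp]
  constructor
  · intro h
    exact ⟨h u (Submodule.subset_span (by simp)), h v (Submodule.subset_span (by simp))⟩
  · rintro ⟨h1, h2⟩ y hy
    rw [Submodule.mem_span_pair] at hy
    obtain ⟨a, b, rfl⟩ := hy
    simp [h1, h2]

lemma phi_mem (ω : H →ₗ[k] H →ₗ[k] k) (halt : ∀ x, ω x x = 0) (u v : H)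
    (huv : ω u v = 1) (x : H) :
    x - (ω x v) • u + (ω x u) • v ∈ perp ω (Submodule.span k ({u, v} : Set H)) := by
  rw [mem_perp_pair]
  constructor
  · simp only [map_add, map_sub, map_smul, LinearMap.add_apply, LinearMap.sub_apply,
      LinearMap.smul_apply, smul_eq_mul, halt u]
    rw [skew ω halt v u, huv]
    ring
  · simp only [map_add, map_sub, map_smul, LinearMap.add_apply, LinearMap.sub_apply,
      LinearMap.smul_apply, smul_eq_mul, halt v, huv]
    ring

/-- The splitting `H ≃ (k×k) × (span{u,v})^⊥`. -/
noncomputable def Phi (ω : H →ₗ[k] H →ₗ[k] k) (halt : ∀ x, ω x x = 0) (u v : H)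
    (huv : ω u v = 1) :
    H ≃ₗ[k] (k × k) × ↥(perp ω (Submodule.span k ({u, v} : Set H))) where
  toFun x := ((ω x v, -(ω x u)), ⟨x - (ω x v) • u + (ω x u) • v, phi_mem ω halt u v huv x⟩)
  invFun p := p.1.1 • u + p.1.2 • v + (p.2 : H)
  map_add' a b := by
    ext
    · simp
    · simp; ring
    · show (a + b) - _ • u + _ • v = (a - _ • u + _ • v) + (b - _ • u + _ • v)
      simp only [map_add, LinearMap.add_apply, add_smul]
      abel
  map_smul' c a := by
    ext
    · simp
    · simp
    · show c • a - _ • u + _ • v = c • (a - _ • u + _ • v)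
      simp only [map_smul, LinearMap.smul_apply, smul_eq_mul, smul_sub, smul_add,
        mul_smul]
  left_inv x := by
    show (ω x v) • u + (-(ω x u)) • v + (x - (ω x v) • u + (ω x u) • v) = x
    rw [neg_smul]
    abel
  right_inv p := by
    obtain ⟨⟨a, b⟩, h, hh⟩ := p
    rw [mem_perp_pair] at hh
    have hvu : ω v u = -1 := by rw [skew ω halt v u, huv]
    have c1 : ω (a • u + b • v + h) v = a := by
      simp [halt v, huv, hh.2]
    have c2 : ω (a • u + b • v + h) u = -b := by
      simp [halt u, hvu, hh.1]
    ext
    · exact c1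
    · show -(ω (a • u + b • v + h) u) = b
      rw [c2]; ring
    · show (a • u + b • v + h) - _ • u + _ • v = h
      rw [c1, c2]
      simp only [neg_smul]
      abel

lemma Phi_apply (ω : H →ₗ[k] H →ₗ[k] k) (halt : ∀ x, ω x x = 0) (u v : H)
    (huv : ω u v = 1) (x : H) :
    Phi ω halt u v huv x =
      ((ω x v, -(ω x u)), ⟨x - (ω x v) • u + (ω x u) • v, phi_mem ω halt u v huv x⟩) := rfl

lemma Phi_symm_apply (ω : H →ₗ[k] H →ₗ[k] k) (halt : ∀ x, ω x x = 0) (u v : H)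
    (huv : ω u v = 1) (p : (k × k) × ↥(perp ω (Submodule.span k ({u, v} : Set H)))) :
    (Phi ω halt u v huv).symm p = p.1.1 • u + p.1.2 • v + (p.2 : H) := rfl

/-- compatibility of ω with the splitting -/
lemma Phi_compat (ω : H →ₗ[k] H →ₗ[k] k) (halt : ∀ x, ω x x = 0) (u v : H)
    (huv : ω u v = 1) (x y : H) :
    ω x y = omegaM2 k ((Phi ω halt u v huv) x).1 ((Phi ω halt u v huv) y).1 +
      ω ((Phi ω halt u v huv x).2 : H) ((Phi ω halt u v huv y).2 : H) := by
  show ω x y = ((ω x v) * (-(ω y u)) - (-(ω x u)) * (ω y v)) +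
      ω (x - (ω x v) • u + (ω x u) • v) (y - (ω y v) • u + (ω y u) • v)
  simp only [map_add, map_sub, map_smul, LinearMap.add_apply, LinearMap.sub_apply,
    LinearMap.smul_apply, smul_eq_mul]
  rw [skew ω halt u y, skew ω halt v y, skew ω halt v u, huv, halt u, halt v]
  ring

end Part4
section Part5
variable {k : Type*} [Field k] {H : Type*} [AddCommGroup H] [Module k H]

/-- generic rank-of-hyperplane-slice lemma -/
lemma finrank_comap_eq [FiniteDimensional k H]
    (L K : Submodule k H) (f : H →ₗ[k] k)
    (hK : ∀ x ∈ L, (x ∈ K ↔ f x = 0)) (w : H) (hw : w ∈ L) (hfw : f w ≠ 0) :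
    Module.finrank k (L.comap K.subtype) + 1 = Module.finrank k L := by
  set φ := f.domRestrict L with hφ
  have h := LinearMap.finrank_range_add_finrank_ker φ
  have hrange : Module.finrank k (LinearMap.range φ) = 1 := by
    have h1 : LinearMap.range φ ≠ ⊥ := by
      intro hbot
      apply hfw
      have : φ ⟨w, hw⟩ ∈ LinearMap.range φ := LinearMap.mem_range_self _ _
      rw [hbot, Submodule.mem_bot] at this
      simpa [hφ] using this
    have h2 : Module.finrank k (LinearMap.range φ) ≤ 1 := by
      simpa using Submodule.finrank_le (LinearMap.range φ)
    have h3 : Module.finrank k (LinearMap.range φ) ≠ 0 := by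
      rw [Ne, Submodule.finrank_eq_zero]
      exact h1
    omega
  have e : ↥(LinearMap.ker φ) ≃ₗ[k] ↥(L.comap K.subtype) :=
    { toFun := fun x => ⟨⟨(x : L), (hK _ (x : L).2).mpr x.2⟩, (x : L).2⟩
      invFun := fun y => ⟨⟨(y : K), y.2⟩, (hK _ y.2).mp (y : K).2⟩
      map_add' := fun a b => rfl
      map_smul' := fun c a => rfl
      left_inv := fun x => rfl
      right_inv := fun y => rfl }
  rw [hrange, LinearEquiv.finrank_eq e] at h
  omega

variable (ω : H →ₗ[k] H →ₗ[k] k) (halt : ∀ x, ω x x = 0) (u v : H) (huv : ω u v = 1)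

lemma map_Phi_left (L : Submodule k H) (hiso : ∀ x ∈ L, ∀ y ∈ L, ω x y = 0) (hu : u ∈ L) :
    L.map (Phi ω halt u v huv : H →ₗ[k] _) =
      (Submodule.span k {((1 : k), (0 : k))}).prod
        (L.comap (perp ω (Submodule.span k ({u, v} : Set H))).subtype) := by
  have hvu : ω v u = -1 := by rw [skew ω halt v u, huv]
  ext z
  rw [Submodule.mem_map_equiv]
  simp only [Submodule.mem_prod, mem_span_10, Submodule.mem_comap, Submodule.coe_subtype]
  constructor
  · intro hz
    have hperp := (mem_perp_pair ω u v).mp (z.2).2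
    have hval : ω ((Phi ω halt u v huv).symm z) u = -z.1.2 := by
      rw [Phi_symm_apply]
      simp only [map_add, LinearMap.add_apply, map_smul, LinearMap.smul_apply,
        smul_eq_mul, halt u, hvu, hperp.1]
      ring
    have h0 : ω ((Phi ω halt u v huv).symm z) u = 0 := hiso _ hz u hu
    have hz12 : z.1.2 = 0 := neg_eq_zero.mp (hval.symm.trans h0)
    refine ⟨hz12, ?_⟩
    have hcoe : (z.2 : H) = (Phi ω halt u v huv).symm z - z.1.1 • u - z.1.2 • v := by
      rw [Phi_symm_apply]; abel
    rw [hcoe, hz12, zero_smul, sub_zero]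
    exact sub_mem hz (Submodule.smul_mem _ _ hu)
  · rintro ⟨h1, h2⟩
    rw [Phi_symm_apply, h1, zero_smul, add_zero]
    exact add_mem (Submodule.smul_mem _ _ hu) h2

lemma map_Phi_right (L : Submodule k H) (hiso : ∀ x ∈ L, ∀ y ∈ L, ω x y = 0) (hv : v ∈ L) :
    L.map (Phi ω halt u v huv : H →ₗ[k] _) =
      (Submodule.span k {((0 : k), (1 : k))}).prod
        (L.comap (perp ω (Submodule.span k ({u, v} : Set H))).subtype) := by
  ext z
  rw [Submodule.mem_map_equiv]
  simp only [Submodule.mem_prod, mem_span_01, Submodule.mem_comap, Submodule.coe_subtype]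
  constructor
  · intro hz
    have hperp := (mem_perp_pair ω u v).mp (z.2).2
    have hval : ω ((Phi ω halt u v huv).symm z) v = z.1.1 := by
      rw [Phi_symm_apply]
      simp only [map_add, LinearMap.add_apply, map_smul, LinearMap.smul_apply,
        smul_eq_mul, halt v, huv, hperp.2]
      ring
    have h0 : ω ((Phi ω halt u v huv).symm z) v = 0 := hiso _ hz v hv
    have hz11 : z.1.1 = 0 := hval.symm.trans h0
    refine ⟨hz11, ?_⟩
    have hcoe : (z.2 : H) = (Phi ω halt u v huv).symm z - z.1.1 • u - z.1.2 • v := by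
      rw [Phi_symm_apply]; abel
    rw [hcoe, hz11, zero_smul, sub_zero]
    exact sub_mem hz (Submodule.smul_mem _ _ hv)
  · rintro ⟨h1, h2⟩
    rw [Phi_symm_apply, h1, zero_smul, zero_add]
    exact add_mem (Submodule.smul_mem _ _ hv) h2

include huv in
lemma finrank_comap_perp_left [FiniteDimensional k H] (L : Submodule k H)
    (hiso : ∀ x ∈ L, ∀ y ∈ L, ω x y = 0) (hu : u ∈ L) :
    Module.finrank k (L.comap (perp ω (Submodule.span k ({u, v} : Set H))).subtype) + 1 =
      Module.finrank k L := by
  refine finrank_comap_eq L _ (ω.flip v) (fun x hx => ?_) u hu (by simp [huv])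
  rw [mem_perp_pair]
  exact ⟨fun h => by simpa using h.2, fun h => ⟨hiso x hx u hu, by simpa using h⟩⟩

include halt huv in
lemma finrank_comap_perp_right [FiniteDimensional k H] (L : Submodule k H)
    (hiso : ∀ x ∈ L, ∀ y ∈ L, ω x y = 0) (hv : v ∈ L) :
    Module.finrank k (L.comap (perp ω (Submodule.span k ({u, v} : Set H))).subtype) + 1 =
      Module.finrank k L := by
  have hvu : ω v u = -1 := by rw [skew ω halt v u, huv]
  refine finrank_comap_eq L _ (ω.flip u) (fun x hx => ?_) v hv (by simp [hvu])
  rw [mem_perp_pair]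
  exact ⟨fun h => by simpa using h.1, fun h => ⟨by simpa using h, hiso x hx v hv⟩⟩

/-- the restricted form on the perp -/
noncomputable def omRes (W : Submodule k H) : ↥W →ₗ[k] ↥W →ₗ[k] k :=
  ω.compl₁₂ W.subtype W.subtype

lemma omRes_apply (W : Submodule k H) (x y : ↥W) : omRes ω W x y = ω x y := rfl

include halt huv in
lemma omRes_nondeg (hnd : ∀ x, (∀ y, ω x y = 0) → x = 0) :
    ∀ x : ↥(perp ω (Submodule.span k ({u, v} : Set H))),
      (∀ y, omRes ω _ x y = 0) → x = 0 := by
  intro x hx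
  have hperp := (mem_perp_pair ω u v).mp x.2
  have : ∀ y : H, ω (x : H) y = 0 := by
    intro y
    have hy : (Phi ω halt u v huv).symm ((Phi ω halt u v huv) y) = y :=
      (Phi ω halt u v huv).symm_apply_apply y
    rw [Phi_symm_apply] at hy
    rw [← hy]
    have h2 := hx ((Phi ω halt u v huv) y).2
    rw [omRes_apply] at h2
    simp only [map_add, map_smul, LinearMap.smul_apply, smul_eq_mul,
      hperp.1, hperp.2, h2]
    ring
  exact Subtype.ext (hnd _ this)

include halt huv in
lemma finrank_perp_pair [FiniteDimensional k H] {g : ℕ}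
    (hdim : Module.finrank k H = 2 * (g + 1)) :
    Module.finrank k (perp ω (Submodule.span k ({u, v} : Set H))) = 2 * g := by
  have := LinearEquiv.finrank_eq (Phi ω halt u v huv)
  rw [Module.finrank_prod, Module.finrank_prod, Module.finrank_self] at this
  omega

lemma map_prodMap {M N M' N' : Type*} [AddCommGroup M] [Module k M] [AddCommGroup N]
    [Module k N] [AddCommGroup M'] [Module k M'] [AddCommGroup N'] [Module k N']
    (f : M →ₗ[k] M') (g : N →ₗ[k] N') (p : Submodule k M) (q : Submodule k N) :
    (p.prod q).map (f.prodMap g) = (p.map f).prod (q.map g) := by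
  ext ⟨a, b⟩
  simp only [Submodule.mem_map, Submodule.mem_prod, Prod.exists, LinearMap.prodMap_apply,
    Prod.mk.injEq]
  constructor
  · rintro ⟨x, y, ⟨hx, hy⟩, hfx, hgy⟩
    exact ⟨⟨x, hx, hfx⟩, ⟨y, hy, hgy⟩⟩
  · rintro ⟨⟨x, hx, hfx⟩, ⟨y, hy, hgy⟩⟩
    exact ⟨x, y, ⟨hx, hy⟩, hfx, hgy⟩

end Part5
section Part6

lemma omegaM_splitM_symm {k : Type*} [Field k] {g : ℕ}
    (p q : (k × k) × (Fin g → k × k)) :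
    omegaM k (g + 1) ((splitM k g).symm p) ((splitM k g).symm q) =
      omegaM2 k p.1 q.1 + omegaM k g p.2 q.2 := by
  rw [omegaM_succ]
  simp [splitM_symm_apply]

lemma map_symm_map {k M N : Type*} [Field k] [AddCommGroup M] [Module k M]
    [AddCommGroup N] [Module k N] (e : M ≃ₗ[k] N) (p : Submodule k M) :
    (p.map (e : M →ₗ[k] N)).map (e.symm : N →ₗ[k] M) = p := by
  ext x
  rw [Submodule.mem_map_equiv, LinearEquiv.symm_symm, Submodule.mem_map_equiv,
    LinearEquiv.symm_apply_apply]

universe u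

lemma main_ind (k : Type*) [Field k] :
    ∀ (g : ℕ) {H : Type u} [AddCommGroup H] [Module k H] [FiniteDimensional k H]
      (ω : H →ₗ[k] H →ₗ[k] k), (∀ x, ω x x = 0) → (∀ x, (∀ y, ω x y = 0) → x = 0) →
      Module.finrank k H = 2 * g →
      ∀ (L₁ L₂ : Submodule k H), (∀ x ∈ L₁, ∀ y ∈ L₁, ω x y = 0) →
      (∀ x ∈ L₂, ∀ y ∈ L₂, ω x y = 0) →
      Module.finrank k L₁ = g → Module.finrank k L₂ = g →
      ∀ d, Module.finrank k (L₁ ⊓ L₂ : Submodule k H) = d →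
      ∃ e : H ≃ₗ[k] (Fin g → k × k),
        (∀ x y, omegaM k g (e x) (e y) = ω x y) ∧
        L₁.map (e : H →ₗ[k] _) = PM k g ∧ L₂.map (e : H →ₗ[k] _) = QM k g d := by
  intro g
  induction g with
  | zero =>
    intro H _ _ _ ω halt hnd hdim L₁ L₂ h1 h2 hf1 hf2 d hd
    haveI : Subsingleton H := Module.finrank_zero_iff.mp (by simpa using hdim)
    haveI hss : Subsingleton (Fin 0 → k × k) := by
      constructor; intro a b; funext i; exact absurd i.2 (by omega)
    have hsub : ∀ p : Submodule k (Fin 0 → k × k), p = PM k 0 := by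
      intro p
      haveI : Subsingleton ↥p := ⟨fun a b => Subtype.ext (Subsingleton.elim _ _)⟩
      haveI : Subsingleton ↥(PM k 0) := ⟨fun a b => Subtype.ext (Subsingleton.elim _ _)⟩
      rw [Submodule.eq_bot_of_subsingleton (p := p),
        Submodule.eq_bot_of_subsingleton (p := PM k 0)]
    refine ⟨LinearEquiv.ofSubsingleton _ _, ?_, ?_, ?_⟩
    · intro x y
      rw [Subsingleton.elim x 0, Subsingleton.elim y 0]
      simp [omegaM_apply]
    · exact hsub _
    · rw [hsub (Submodule.map _ L₂), hsub (QM k 0 d)]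
  | succ g IH =>
    intro H _ _ _ ω halt hnd hdim L₁ L₂ h1iso h2iso hf1 hf2 d hd
    -- we find u, v with ω u v = 1, u ∈ L₁, and u ∈ L₂ (if d > 0) or v ∈ L₂ (if d = 0),
    -- then apply the inductive hypothesis inside (span {u,v})^⊥.
    suffices key : ∀ (u v : H), ω u v = 1 → u ∈ L₁ →
        ∀ d' : ℕ, ((u ∈ L₂ ∧ d = d' + 1) ∨ (v ∈ L₂ ∧ d = 0 ∧ d' = 0 ∧ L₁ ⊓ L₂ = ⊥)) →
        ∃ e : H ≃ₗ[k] (Fin (g+1) → k × k),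
          (∀ x y, omegaM k (g+1) (e x) (e y) = ω x y) ∧
          L₁.map (e : H →ₗ[k] _) = PM k (g+1) ∧ L₂.map (e : H →ₗ[k] _) = QM k (g+1) d by
      rcases d with _ | d'
      · -- d = 0
        have hbot : L₁ ⊓ L₂ = ⊥ := by
          have := Submodule.finrank_eq_zero (S := L₁ ⊓ L₂)
          exact this.mp hd
        have hne : L₁ ≠ ⊥ := by
          intro hb
          rw [hb, finrank_bot] at hf1
          omega
        obtain ⟨u, hu1, hu0⟩ := Submodule.exists_mem_ne_zero_of_ne_bot hne
        have hlag2 : perp ω L₂ = L₂ :=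
          lagrangian_of_isotropic ω hnd hdim h2iso hf2
        have hu2 : u ∉ L₂ := by
          intro h
          exact hu0 (by simpa [hbot] using Submodule.mem_inf.mpr ⟨hu1, h⟩)
        have hup : u ∉ perp ω L₂ := by rw [hlag2]; exact hu2
        rw [mem_perp] at hup
        push_neg at hup
        obtain ⟨y, hy2, hωy⟩ := hup
        refine key u ((ω u y)⁻¹ • y) ?_ hu1 0 (Or.inr ⟨Submodule.smul_mem _ _ hy2, rfl, rfl, hbot⟩)
        rw [map_smul, smul_eq_mul]
        exact inv_mul_cancel₀ hωy
      · -- d = d' + 1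
        have hne : L₁ ⊓ L₂ ≠ ⊥ := by
          intro hb
          rw [hb, finrank_bot] at hd
          omega
        obtain ⟨u, hu, hu0⟩ := Submodule.exists_mem_ne_zero_of_ne_bot hne
        have : ∃ y, ω u y ≠ 0 := by
          by_contra hc
          push_neg at hc
          exact hu0 (hnd u hc)
        obtain ⟨y, hωy⟩ := this
        refine key u ((ω u y)⁻¹ • y) ?_ (Submodule.mem_inf.mp hu).1 d'
          (Or.inl ⟨(Submodule.mem_inf.mp hu).2, rfl⟩)
        rw [map_smul, smul_eq_mul]
        exact inv_mul_cancel₀ hωy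
    intro u v huv hu1 d' hcase
    set Hp := perp ω (Submodule.span k ({u, v} : Set H)) with hHp
    set Φ := Phi ω halt u v huv with hΦ
    set ω' := omRes ω Hp with hω'
    have halt' : ∀ x : ↥Hp, ω' x x = 0 := fun x => halt x
    have hnd' := omRes_nondeg ω halt u v huv hnd
    have hdim' : Module.finrank k Hp = 2 * g :=
      finrank_perp_pair ω halt u v huv hdim
    set L₁' := L₁.comap Hp.subtype with hL₁'
    set L₂' := L₂.comap Hp.subtype with hL₂'
    have h1iso' : ∀ x ∈ L₁', ∀ y ∈ L₁', ω' x y = 0 := fun x hx y hy => h1iso x hx y hy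
    have h2iso' : ∀ x ∈ L₂', ∀ y ∈ L₂', ω' x y = 0 := fun x hx y hy => h2iso x hx y hy
    have hf1' : Module.finrank k L₁' = g := by
      have := finrank_comap_perp_left ω u v huv L₁ h1iso hu1
      rw [hf1, ← hHp, ← hL₁'] at this
      omega
    have hinf : L₁' ⊓ L₂' = (L₁ ⊓ L₂).comap Hp.subtype := by
      rw [hL₁', hL₂', Submodule.comap_inf]
    rcases hcase with ⟨hu2, hdd⟩ | ⟨hv2, hd0, hd'0, hbot⟩
    · -- shared case : u ∈ L₂, d = d' + 1
      have hf2' : Module.finrank k L₂' = g := by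
        have := finrank_comap_perp_left ω u v huv L₂ h2iso hu2
        rw [hf2, ← hHp, ← hL₂'] at this
        omega
      have hd' : Module.finrank k (L₁' ⊓ L₂' : Submodule k ↥Hp) = d' := by
        rw [hinf]
        have := finrank_comap_perp_left ω u v huv (L₁ ⊓ L₂)
          (fun x hx y hy => h1iso x (Submodule.mem_inf.mp hx).1 y (Submodule.mem_inf.mp hy).1)
          (Submodule.mem_inf.mpr ⟨hu1, hu2⟩)
        rw [hd, hdd, ← hHp] at this
        omega
      obtain ⟨e', hcompat', hP', hQ'⟩ := IH ω' halt' hnd' hdim' L₁' L₂' h1iso' h2iso'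
        hf1' hf2' d' hd'
      refine ⟨Φ ≪≫ₗ ((LinearEquiv.refl k (k × k)).prodCongr e') ≪≫ₗ
        (splitM k g).symm, ?_, ?_, ?_⟩
      · intro x y
        simp only [LinearEquiv.trans_apply, LinearEquiv.prodCongr_apply, Prod.map]
        rw [omegaM_splitM_symm]
        simp only [LinearEquiv.refl_apply]
        rw [hcompat']
        rw [hω', omRes_apply]
        exact (Phi_compat ω halt u v huv x y).symm
      · rw [LinearEquiv.coe_trans, LinearEquiv.coe_trans, Submodule.map_comp,
          Submodule.map_comp]
        rw [hΦ, map_Phi_left ω halt u v huv L₁ h1iso hu1]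
        have hcoe : (((LinearEquiv.refl k (k × k)).prodCongr e') :
            (k × k) × ↥Hp →ₗ[k] (k × k) × (Fin g → k × k)) =
            (LinearMap.id).prodMap (e' : ↥Hp →ₗ[k] _) := by
          ext z <;> rfl
        rw [hcoe, map_prodMap, Submodule.map_id, hP', ← map_splitM_PM, map_symm_map]
      · rw [LinearEquiv.coe_trans, LinearEquiv.coe_trans, Submodule.map_comp,
          Submodule.map_comp]
        rw [hΦ, map_Phi_left ω halt u v huv L₂ h2iso hu2]
        have hcoe : (((LinearEquiv.refl k (k × k)).prodCongr e') :
            (k × k) × ↥Hp →ₗ[k] (k × k) × (Fin g → k × k)) =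
            (LinearMap.id).prodMap (e' : ↥Hp →ₗ[k] _) := by
          ext z <;> rfl
        rw [hcoe, map_prodMap, Submodule.map_id, hQ', hdd, ← map_splitM_QM_succ,
          map_symm_map]
    · -- transverse case : v ∈ L₂, d = 0
      have hf2' : Module.finrank k L₂' = g := by
        have := finrank_comap_perp_right ω halt u v huv L₂ h2iso hv2
        rw [hf2, ← hHp, ← hL₂'] at this
        omega
      have hd' : Module.finrank k (L₁' ⊓ L₂' : Submodule k ↥Hp) = 0 := by
        rw [hinf, hbot, Submodule.comap_bot, Submodule.ker_subtype, finrank_bot]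
      obtain ⟨e', hcompat', hP', hQ'⟩ := IH ω' halt' hnd' hdim' L₁' L₂' h1iso' h2iso'
        hf1' hf2' 0 hd'
      refine ⟨Φ ≪≫ₗ ((LinearEquiv.refl k (k × k)).prodCongr e') ≪≫ₗ
        (splitM k g).symm, ?_, ?_, ?_⟩
      · intro x y
        simp only [LinearEquiv.trans_apply, LinearEquiv.prodCongr_apply, Prod.map]
        rw [omegaM_splitM_symm]
        simp only [LinearEquiv.refl_apply]
        rw [hcompat']
        rw [hω', omRes_apply]
        exact (Phi_compat ω halt u v huv x y).symm
      · rw [LinearEquiv.coe_trans, LinearEquiv.coe_trans, Submodule.map_comp,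
          Submodule.map_comp]
        rw [hΦ, map_Phi_left ω halt u v huv L₁ h1iso hu1]
        have hcoe : (((LinearEquiv.refl k (k × k)).prodCongr e') :
            (k × k) × ↥Hp →ₗ[k] (k × k) × (Fin g → k × k)) =
            (LinearMap.id).prodMap (e' : ↥Hp →ₗ[k] _) := by
          ext z <;> rfl
        rw [hcoe, map_prodMap, Submodule.map_id, hP', ← map_splitM_PM, map_symm_map]
      · rw [LinearEquiv.coe_trans, LinearEquiv.coe_trans, Submodule.map_comp,
          Submodule.map_comp]
        rw [hΦ, map_Phi_right ω halt u v huv L₂ h2iso hv2]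
        have hcoe : (((LinearEquiv.refl k (k × k)).prodCongr e') :
            (k × k) × ↥Hp →ₗ[k] (k × k) × (Fin g → k × k)) =
            (LinearMap.id).prodMap (e' : ↥Hp →ₗ[k] _) := by
          ext z <;> rfl
        rw [hcoe, map_prodMap, Submodule.map_id, hQ', hd0, ← map_splitM_QM_zero,
          map_symm_map]

end Part6
section Part7
variable {k : Type*} [Field k] {H H₂ : Type*} [AddCommGroup H] [Module k H]
  [AddCommGroup H₂] [Module k H₂]

lemma perp_map (ω : H →ₗ[k] H →ₗ[k] k) (ω₂ : H₂ →ₗ[k] H₂ →ₗ[k] k)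
    (e : H ≃ₗ[k] H₂) (hcompat : ∀ x y, ω₂ (e x) (e y) = ω x y) (F : Submodule k H) :
    (perp ω F).map (e : H →ₗ[k] H₂) = perp ω₂ (F.map (e : H →ₗ[k] H₂)) := by
  ext z
  rw [Submodule.mem_map_equiv, mem_perp, mem_perp]
  constructor
  · intro h y' hy'
    obtain ⟨y, hy, rfl⟩ := hy'
    have : ω₂ (e (e.symm z)) (e y) = ω (e.symm z) y := hcompat _ _
    rw [e.apply_symm_apply] at this
    rw [show ((e : H →ₗ[k] H₂) y) = e y from rfl, this]
    exact h y hy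
  · intro h y hy
    have : ω₂ (e (e.symm z)) (e y) = ω (e.symm z) y := hcompat _ _
    rw [e.apply_symm_apply] at this
    rw [← this]
    exact h (e y) (Submodule.mem_map_of_mem hy)

lemma isLagrangian_map (ω : H →ₗ[k] H →ₗ[k] k) (ω₂ : H₂ →ₗ[k] H₂ →ₗ[k] k)
    (e : H ≃ₗ[k] H₂) (hcompat : ∀ x y, ω₂ (e x) (e y) = ω x y) {F : Submodule k H}
    (hF : IsLagrangian ω F) : IsLagrangian ω₂ (F.map (e : H →ₗ[k] H₂)) := by
  rw [IsLagrangian, ← perp_map ω ω₂ e hcompat, hF]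

end Part7

theorem orbit_count_of_lagrangian_pairs
    {k H : Type*} [Field k] [AddCommGroup H] [Module k H] [FiniteDimensional k H]
    (g : ℕ)
    (ω : H →ₗ[k] H →ₗ[k] k)
    (halt : ∀ x, ω x x = 0)
    (hnd : ∀ x, (∀ y, ω x y = 0) → x = 0)
    (hdim : Module.finrank k H = 2 * g) :
    ∃ c : {P : Submodule k H × Submodule k H //
        IsLagrangian ω P.1 ∧ IsLagrangian ω P.2} → Fin (g + 1),
      Function.Surjective c ∧
      ∀ A B, c A = c B ↔
        ∃ τ : H ≃ₗ[k] H, (∀ x y, ω (τ x) (τ y) = ω x y) ∧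
          A.1.1.map (τ : H →ₗ[k] H) = B.1.1 ∧ A.1.2.map (τ : H →ₗ[k] H) = B.1.2 := by
  classical
  -- the invariant: dimension of the intersection
  have hrank : ∀ A : {P : Submodule k H × Submodule k H //
      IsLagrangian ω P.1 ∧ IsLagrangian ω P.2},
      Module.finrank k (A.1.1 ⊓ A.1.2 : Submodule k H) < g + 1 := by
    intro A
    have h1 : Module.finrank k A.1.1 = g := lagrangian_finrank ω hnd hdim A.2.1
    have := Submodule.finrank_mono (inf_le_left : A.1.1 ⊓ A.1.2 ≤ A.1.1)
    omega
  refine ⟨fun A => ⟨Module.finrank k (A.1.1 ⊓ A.1.2 : Submodule k H), hrank A⟩, ?_, ?_⟩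
  · -- surjectivity
    obtain ⟨L, hL⟩ := exists_lagrangian ω halt hnd
    obtain ⟨e₀, hcompat₀, -, -⟩ := main_ind k g ω halt hnd hdim L L
      (lagrangian_isotropic ω hL) (lagrangian_isotropic ω hL)
      (lagrangian_finrank ω hnd hdim hL) (lagrangian_finrank ω hnd hdim hL)
      (Module.finrank k (L ⊓ L : Submodule k H)) rfl
    -- the inverse equivalence is compatible the other way
    have hcompat₀' : ∀ x y, ω (e₀.symm x) (e₀.symm y) = omegaM k g x y := by
      intro x y
      have := hcompat₀ (e₀.symm x) (e₀.symm y)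
      rw [e₀.apply_symm_apply, e₀.apply_symm_apply] at this
      exact this.symm
    intro i
    -- pull back standard Lagrangians
    have hPMlag : IsLagrangian (omegaM k g) (PM k g) :=
      lagrangian_of_isotropic (omegaM k g) (omegaM_nondeg g) (finrank_model g)
        PM_isotropic (finrank_PM g)
    have hQMlag : IsLagrangian (omegaM k g) (QM k g i) :=
      lagrangian_of_isotropic (omegaM k g) (omegaM_nondeg g) (finrank_model g)
        QM_isotropic (finrank_QM g i)
    refine ⟨⟨((PM k g).map (e₀.symm : _ →ₗ[k] H), (QM k g i).map (e₀.symm : _ →ₗ[k] H)),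
      isLagrangian_map _ ω e₀.symm hcompat₀' hPMlag,
      isLagrangian_map _ ω e₀.symm hcompat₀' hQMlag⟩, ?_⟩
    apply Fin.ext
    show Module.finrank k ((Submodule.map (e₀.symm : _ →ₗ[k] H) (PM k g)) ⊓
      (Submodule.map (e₀.symm : _ →ₗ[k] H) (QM k g i)) : Submodule k H) = (i : ℕ)
    rw [← Submodule.map_inf (e₀.symm : (Fin g → k × k) →ₗ[k] H) (by exact e₀.symm.injective),
      LinearEquiv.finrank_map_eq, finrank_PM_inf_QM g i (by omega)]
  · -- fibers are orbits
    intro A B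
    constructor
    · intro hc
      set d := Module.finrank k (A.1.1 ⊓ A.1.2 : Submodule k H) with hdA
      have hdB : Module.finrank k (B.1.1 ⊓ B.1.2 : Submodule k H) = d := by
        have := congrArg Fin.val hc
        simpa using this.symm
      obtain ⟨eA, hcompatA, hPA, hQA⟩ := main_ind k g ω halt hnd hdim A.1.1 A.1.2
        (lagrangian_isotropic ω A.2.1) (lagrangian_isotropic ω A.2.2)
        (lagrangian_finrank ω hnd hdim A.2.1) (lagrangian_finrank ω hnd hdim A.2.2)
        d rfl
      obtain ⟨eB, hcompatB, hPB, hQB⟩ := main_ind k g ω halt hnd hdim B.1.1 B.1.2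
        (lagrangian_isotropic ω B.2.1) (lagrangian_isotropic ω B.2.2)
        (lagrangian_finrank ω hnd hdim B.2.1) (lagrangian_finrank ω hnd hdim B.2.2)
        d hdB
      refine ⟨eA ≪≫ₗ eB.symm, ?_, ?_, ?_⟩
      · intro x y
        show ω (eB.symm (eA x)) (eB.symm (eA y)) = ω x y
        have h1 := hcompatB (eB.symm (eA x)) (eB.symm (eA y))
        rw [eB.apply_symm_apply, eB.apply_symm_apply] at h1
        rw [← h1, hcompatA]
      · rw [LinearEquiv.coe_trans, Submodule.map_comp, hPA, ← hPB, map_symm_map]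
      · rw [LinearEquiv.coe_trans, Submodule.map_comp, hQA, ← hQB, map_symm_map]
    · rintro ⟨τ, hτ, h1, h2⟩
      apply Fin.ext
      show Module.finrank k (A.1.1 ⊓ A.1.2 : Submodule k H) =
        Module.finrank k (B.1.1 ⊓ B.1.2 : Submodule k H)
      rw [← h1, ← h2, ← Submodule.map_inf (τ : H →ₗ[k] H) τ.injective,
        LinearEquiv.finrank_map_eq]
end

section
/- Let k be a perfect field of characteristic p > 0, (H, ω) a finite-dimensional symplectic k-vector space, I ⊆ H an isotropic subspace, and φ a symplectic zip on H compatible with I. Then the image of φ intersects I trivially: (im φ) ∩ I = 0. -/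
/-- Over a perfect field the Frobenius is surjective, so ranges of Frobenius-semilinear
maps are submodules. -/
instance frobeniusSurjective (k : Type*) [Field k] (p : ℕ) [Fact p.Prime] [CharP k p]
    [PerfectRing k p] : RingHomSurjective (frobenius k p) :=
  ⟨surjective_frobenius k p⟩

theorem zip_range_inter_isotropic_trivial
    {k : Type*} [Field k] (p : ℕ) [Fact p.Prime] [CharP k p] [PerfectRing k p]
    {H : Type*} [AddCommGroup H] [Module k H] [FiniteDimensional k H]
    (ω : H →ₗ[k] H →ₗ[k] k)
    (halt : ∀ x, ω x x = 0)
    (hnd : ∀ x, (∀ y, ω x y = 0) → x = 0)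
    (I : Submodule k H) (hiso : I ≤ perp ω I)
    (φ : H →ₛₗ[frobenius k p] H)
    (hker : IsLagrangian ω (LinearMap.ker φ))
    (hrange : IsLagrangian ω (LinearMap.range φ))
    -- compatibility with `I`:
    (hφI : ∀ x ∈ I, φ x = 0)
    (hφP : ∀ x ∈ perp ω I, φ x ∈ perp ω I)
    (hφinj : ∀ x : H, φ x ∈ perp ω I → x ∈ perp ω I)
    (hφsurj : ∀ y : H, ∃ x : H, y - φ x ∈ perp ω I) :
    LinearMap.range φ ⊓ I = ⊥ := by
  -- skew-symmetry from alternating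
  have hskew : ∀ a b : H, ω a b = -ω b a := by
    intro a b
    have h := halt (a + b)
    simp only [map_add, LinearMap.add_apply, halt a, halt b] at h
    linear_combination h
  rw [eq_bot_iff]
  rintro y ⟨hyR, hyI⟩
  simp only [Submodule.mem_bot]
  apply hnd y
  intro z
  obtain ⟨x, hx⟩ := hφsurj z
  have h1 : ω y (φ x) = 0 := by
    have hφxmem : φ x ∈ perp ω (LinearMap.range φ) := by
      rw [hrange]; exact ⟨x, rfl⟩
    have := hφxmem y hyR
    rw [hskew]; rw [this]; ring
  have h2 : ω y (z - φ x) = 0 := by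
    have := hx y hyI
    rw [hskew]; rw [this]; ring
  have : ω y z = ω y (φ x) + ω y (z - φ x) := by
    rw [← map_add]
    congr 1
    abel
  rw [this, h1, h2, add_zero]
end

section
/- Let k be a perfect field of characteristic p > 0, (H, ω) a finite-dimensional symplectic k-vector space, I ⊆ H an isotropic subspace, and φ a symplectic zip on H compatible with I, with induced Frobenius-semilinear map φ' on H' = I^⊥/I. Then the kernel of φ' equals (ker φ)/I and is a Lagrangian subspace of (H', ω'). -/
theorem zip_induced_kernel
    {k : Type*} [Field k] (p : ℕ) [Fact p.Prime] [CharP k p] [PerfectRing k p]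
    {H : Type*} [AddCommGroup H] [Module k H] [FiniteDimensional k H]
    (ω : H →ₗ[k] H →ₗ[k] k)
    (halt : ∀ x, ω x x = 0)
    (hnd : ∀ x, (∀ y, ω x y = 0) → x = 0)
    (I : Submodule k H) (hiso : I ≤ perp ω I)
    (φ : H →ₛₗ[frobenius k p] H)
    (hker : IsLagrangian ω (LinearMap.ker φ))
    (hrange : IsLagrangian ω (LinearMap.range φ))
    -- compatibility with `I`:
    (hφI : ∀ x ∈ I, φ x = 0)
    (hφP : ∀ x ∈ perp ω I, φ x ∈ perp ω I)
    (hφinj : ∀ x : H, φ x ∈ perp ω I → x ∈ perp ω I)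
    (hφsurj : ∀ y : H, ∃ x : H, y - φ x ∈ perp ω I)
    -- the induced form `ω'` on `H' = I^⊥ / I`:
    (ω' : (perp ω I ⧸ I.comap (perp ω I).subtype) →ₗ[k]
        (perp ω I ⧸ I.comap (perp ω I).subtype) →ₗ[k] k)
    (hω' : ∀ x y : perp ω I,
        ω' (Submodule.Quotient.mk x) (Submodule.Quotient.mk y) = ω (x : H) (y : H))
    -- the induced map `φ'` on `H' = I^⊥ / I`:
    (φ' : (perp ω I ⧸ I.comap (perp ω I).subtype) →
        (perp ω I ⧸ I.comap (perp ω I).subtype))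
    (hφ' : ∀ (x : perp ω I) (hx : φ (x : H) ∈ perp ω I),
        φ' (Submodule.Quotient.mk x) =
          Submodule.Quotient.mk (⟨φ (x : H), hx⟩ : perp ω I)) :
    (∀ z, φ' z = 0 ↔
        z ∈ Submodule.map (I.comap (perp ω I).subtype).mkQ
          ((LinearMap.ker φ).comap (perp ω I).subtype)) ∧
    IsLagrangian ω'
      (Submodule.map (I.comap (perp ω I).subtype).mkQ
        ((LinearMap.ker φ).comap (perp ω I).subtype)) := by
  classical
  have hmem : ∀ (F : Submodule k H) (x : H), x ∈ perp ω F ↔ ∀ y ∈ F, ω x y = 0 :=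
    fun F x => Iff.rfl
  have hskew : ∀ a b : H, ω a b = - ω b a := by
    intro a b
    have h := halt (a + b)
    simp only [map_add, LinearMap.add_apply, halt a, halt b, zero_add, add_zero] at h
    linear_combination h
  have hIker : I ≤ LinearMap.ker φ := fun x hx => LinearMap.mem_ker.2 (hφI x hx)
  have hkerP : LinearMap.ker φ ≤ perp ω I := by
    intro x hx
    have hx' : x ∈ perp ω (LinearMap.ker φ) := hker.symm ▸ hx
    exact fun y hy => hx' y (hIker hy)
  have hrange0 : ∀ a b : H, ω (φ a) (φ b) = 0 := by
    intro a b
    have ha : φ a ∈ perp ω (LinearMap.range φ) :=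
      hrange.symm ▸ LinearMap.mem_range_self φ a
    exact ha (φ b) (LinearMap.mem_range_self φ b)
  set K' := Submodule.map (I.comap (perp ω I).subtype).mkQ
      ((LinearMap.ker φ).comap (perp ω I).subtype) with hK'
  have hmkK' : ∀ x : perp ω I, (Submodule.Quotient.mk x : _) ∈ K' ↔
      ∃ a : perp ω I, φ (a : H) = 0 ∧ Submodule.Quotient.mk a = (Submodule.Quotient.mk x :
        perp ω I ⧸ I.comap (perp ω I).subtype) := by
    intro x
    constructor
    · rintro ⟨a, ha, h⟩
      exact ⟨a, Submodule.mem_comap.1 ha, h⟩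
    · rintro ⟨a, ha, h⟩
      exact ⟨a, Submodule.mem_comap.2 ha, h⟩
  have hkerK' : ∀ x : perp ω I, φ (x : H) = 0 → (Submodule.Quotient.mk x : _) ∈ K' :=
    fun x hx => ⟨x, hx, rfl⟩
  have key : ∀ z, φ' z = 0 ↔ z ∈ K' := by
    intro z
    obtain ⟨x, rfl⟩ := Submodule.Quotient.mk_surjective _ z
    have hφx : φ (x : H) ∈ perp ω I := hφP _ x.2
    rw [hφ' x hφx]
    constructor
    · intro h
      have hφxI : φ (x : H) ∈ I := by
        have := (Submodule.Quotient.mk_eq_zero _).1 h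
        simpa [Submodule.mem_comap] using this
      have hφx0 : φ (x : H) = 0 := by
        apply hnd
        intro y
        obtain ⟨w, hw⟩ := hφsurj y
        have h1 : ω (φ (x : H)) (φ w) = 0 := hrange0 _ _
        have h2 : ω (φ (x : H)) (y - φ w) = 0 := by
          rw [hskew]
          rw [hw (φ (x : H)) hφxI]
          ring
        have hy : y = φ w + (y - φ w) := by abel
        rw [hy, map_add, h1, h2, add_zero]
      exact hkerK' x hφx0
    · intro h
      obtain ⟨a, ha, hax⟩ := (hmkK' x).1 h
      have hsub : ((a : H) - (x : H)) ∈ I := by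
        have h1 := (Submodule.Quotient.eq _).1 hax
        simpa [Submodule.mem_comap] using h1
      have hφx0 : φ (x : H) = 0 := by
        have h2 : φ ((a : H) - (x : H)) = 0 := hφI _ hsub
        rw [map_sub, ha] at h2
        simpa using h2.symm
      rw [Submodule.Quotient.mk_eq_zero]
      simpa [Submodule.mem_comap, hφx0] using I.zero_mem
  refine ⟨key, ?_⟩
  unfold IsLagrangian
  ext z
  obtain ⟨x, rfl⟩ := Submodule.Quotient.mk_surjective _ z
  constructor
  · intro h
    have hx : (x : H) ∈ perp ω (LinearMap.ker φ) := by
      intro y hy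
      have hyP : y ∈ perp ω I := hkerP hy
      have hmem : (Submodule.Quotient.mk (⟨y, hyP⟩ : perp ω I) : _) ∈ K' :=
        hkerK' _ hy
      have := h _ hmem
      rw [hω'] at this
      exact this
    have hxker : (x : H) ∈ LinearMap.ker φ := hker ▸ hx
    exact hkerK' x hxker
  · intro h
    obtain ⟨a, ha, hax⟩ := (hmkK' x).1 h
    intro w hw
    obtain ⟨b, hbw, rfl⟩ := hw
    have hb : (b : H) ∈ LinearMap.ker φ := hbw
    have hak : (a : H) ∈ perp ω (LinearMap.ker φ) := hker.symm ▸ (LinearMap.mem_ker.2 ha)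
    have hab : ω (a : H) (b : H) = 0 := hak _ hb
    calc ω' (Submodule.Quotient.mk x) ((I.comap (perp ω I).subtype).mkQ b)
        = ω' (Submodule.Quotient.mk a) (Submodule.Quotient.mk b) := by rw [hax]; rfl
      _ = ω (a : H) (b : H) := hω' a b
      _ = 0 := hab
end
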